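/- For n ≥ 4 and a ≠ 0, define Yk recursively by Y_{k+1} = ⁅Y1, Y_k⁆ for k ≥ 2. Then ⁅Y_i, Y_j⁆ = 0 for all i, j ≥ 2; that is, all the iterated brackets ad(Y1)^k(Y2), k ≥ 0, commute pairwise, so the span of {Y1, Y2, Y3, …} is a nilpotent Lie subalgebra of gl(n+1, ℂ) with one-codimensional abelian ideal (the model filiform structure L_n). -/

import Mathlib

open Matrix
open Fin.NatCast

noncomputable section

/-- The (n+1)×(n+1) matrix unit `E i j` (with 0-based indices). -/
def E (n : ℕ) (i j : Fin (n+1)) : Matrix (Fin (n+1)) (Fin (n+1)) ℂ :=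
  Matrix.single i j 1

/-- Y1 = a·(E₁₁+E₁₂+E₂₁+E₂₂) + E_{1,n+1} + Σ_{k=4}^{n} ((k−3)/(k−2))·E_{k,k−1}
    + α·E_{n,1} + β·E_{n,2}  (1-based indexing). -/
def Y1 (n : ℕ) (a α β : ℂ) : Matrix (Fin (n+1)) (Fin (n+1)) ℂ :=
  a • (E n 0 0 + E n 0 1 + E n 1 0 + E n 1 1) + E n 0 (Fin.last n)
    + ∑ k ∈ Finset.Icc 4 n, (((k : ℂ) - 3) / ((k : ℂ) - 2)) • E n (↑(k-1)) (↑(k-2))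
    + α • E n (↑(n-1)) 0 + β • E n (↑(n-1)) 1

/-- Y2 = a·(E₁₁+E₁₂+E₂₁+E₂₂) + E_{2,n+1} − E_{3,1} + E_{3,2}
    + Σ_{k=4}^{n} (1/(k−2))·E_{k,k−1} + β·E_{n,1} + α·E_{n,2}  (1-based indexing). -/
def Y2 (n : ℕ) (a α β : ℂ) : Matrix (Fin (n+1)) (Fin (n+1)) ℂ :=
  a • (E n 0 0 + E n 0 1 + E n 1 0 + E n 1 1) + E n 1 (Fin.last n)
    - E n 2 0 + E n 2 1
    + ∑ k ∈ Finset.Icc 4 n, (1 / ((k : ℂ) - 2)) • E n (↑(k-1)) (↑(k-2))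
    + β • E n (↑(n-1)) 0 + α • E n (↑(n-1)) 1
/-- `Yad n a α β k = ad(Y1)^k (Y2)`, i.e. Y_{k+2} in the paper's notation. -/
def Yad (n : ℕ) (a α β : ℂ) : ℕ → Matrix (Fin (n+1)) (Fin (n+1)) ℂ
  | 0 => Y2 n a α β
  | k + 1 => ⁅Y1 n a α β, Yad n a α β k⁆

section
attribute [local instance] LieRing.ofAssociativeRing

namespace IBC

def sc (r : ℕ) : ℂ := ((r:ℂ)-3)/((r:ℂ)-2)
def tc (r : ℕ) : ℂ := 1/((r:ℂ)-2)
def dc (k m : ℕ) : ℂ :=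
  ((Nat.factorial k * Nat.factorial (m - k - 3) : ℕ) : ℂ) / ((Nat.factorial (m-2) : ℕ) : ℂ)
lemma ncne (m : ℕ) (h : m ≠ 0) : ((m:ℕ):ℂ) ≠ 0 := Nat.cast_ne_zero.mpr h
lemma fcne (m : ℕ) : ((Nat.factorial m : ℕ):ℂ) ≠ 0 := ncne _ (Nat.factorial_ne_zero m)

lemma I1 (k : ℕ) : sc (k+3) + dc k (k+3) = 1 := by
  unfold sc dc
  have h1 : k+3-k-3 = 0 := by omega
  have h3 : k+3-2 = k+1 := by omega
  rw [h1, h3, Nat.factorial_zero, mul_one, Nat.factorial_succ, Nat.cast_mul,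
    show ((k+3:ℕ):ℂ) = (k:ℂ)+3 by push_cast; ring,
    show ((k+1:ℕ):ℂ) = (k:ℂ)+1 by push_cast; ring,
    show (k:ℂ)+3-3 = (k:ℂ) by ring, show (k:ℂ)+3-2 = (k:ℂ)+1 by ring]
  have c1 : (k:ℂ)+1 ≠ 0 := by exact_mod_cast ncne (k+1) (by omega)
  have c2 := fcne k
  rw [div_add_div _ _ c1 (mul_ne_zero c1 c2), div_eq_one_iff_eq (mul_ne_zero c1 (mul_ne_zero c1 c2))]
  ring

lemma I3 (k j : ℕ) :
    sc (k+5+j) * dc k (k+4+j) - dc k (k+5+j) * sc (j+4) = dc (k+1) (k+5+j) := by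
  unfold sc dc
  have h1 : k+4+j-k-3 = j+1 := by omega
  have h2 : k+4+j-2 = k+2+j := by omega
  have h3 : k+5+j-k-3 = j+2 := by omega
  have h4 : k+5+j-2 = k+3+j := by omega
  have h5 : k+5+j-(k+1)-3 = j+1 := by omega
  rw [h1, h2, h3, h4, h5]
  rw [show k+3+j = (k+2+j)+1 by omega, Nat.factorial_succ (k+2+j),
    Nat.factorial_succ (j+1), Nat.factorial_succ k, Nat.factorial_succ j]
  simp only [Nat.cast_mul]
  rw [show ((k+5+j:ℕ):ℂ) = (k:ℂ)+5+(j:ℂ) by push_cast; ring,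
    show ((j+4:ℕ):ℂ) = (j:ℂ)+4 by push_cast; ring,
    show ((k+2+j+1:ℕ):ℂ) = (k:ℂ)+3+(j:ℂ) by push_cast; ring,
    show ((j+1+1:ℕ):ℂ) = (j:ℂ)+2 by push_cast; ring,
    show ((j+1:ℕ):ℂ) = (j:ℂ)+1 by push_cast; ring,
    show ((k+1:ℕ):ℂ) = (k:ℂ)+1 by push_cast; ring,
    show (k:ℂ)+5+(j:ℂ)-3 = (k:ℂ)+2+(j:ℂ) by ring,
    show (k:ℂ)+5+(j:ℂ)-2 = (k:ℂ)+3+(j:ℂ) by ring,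
    show (j:ℂ)+4-3 = (j:ℂ)+1 by ring,
    show (j:ℂ)+4-2 = (j:ℂ)+2 by ring]
  have c1 : (k:ℂ)+3+(j:ℂ) ≠ 0 := by exact_mod_cast ncne (k+3+j) (by omega)
  have c2 : (k:ℂ)+2+(j:ℂ) ≠ 0 := by exact_mod_cast ncne (k+2+j) (by omega)
  have c3 : (j:ℂ)+2 ≠ 0 := by exact_mod_cast ncne (j+2) (by omega)
  have c5 := fcne (k+2+j)
  have c6 := fcne j
  have c7 := fcne k
  rw [div_mul_div_comm, div_mul_div_comm,
    div_sub_div _ _ (mul_ne_zero c1 c5) (mul_ne_zero (mul_ne_zero c1 c5) c3),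
    div_eq_div_iff (mul_ne_zero (mul_ne_zero c1 c5) (mul_ne_zero (mul_ne_zero c1 c5) c3))
      (mul_ne_zero c1 c5)]
  ring



lemma I2 (k : ℕ) : sc (k+4) * dc k (k+3) = dc (k+1) (k+4) := by
  unfold sc dc
  have h1 : k+3-k-3 = 0 := by omega
  have h2 : k+3-2 = k+1 := by omega
  have h3 : k+4-(k+1)-3 = 0 := by omega
  have h4 : k+4-2 = k+2 := by omega
  rw [h1, h2, h3, h4, Nat.factorial_zero, mul_one, mul_one,
    show k+2 = k+1+1 from rfl, Nat.factorial_succ (k+1), Nat.factorial_succ k]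
  simp only [Nat.cast_mul]
  rw [show ((k+4:ℕ):ℂ) = (k:ℂ)+4 by push_cast; ring,
    show ((k+1+1:ℕ):ℂ) = (k:ℂ)+2 by push_cast; ring,
    show ((k+1:ℕ):ℂ) = (k:ℂ)+1 by push_cast; ring,
    show (k:ℂ)+4-3 = (k:ℂ)+1 by ring, show (k:ℂ)+4-2 = (k:ℂ)+2 by ring]
  have c1 : (k:ℂ)+1 ≠ 0 := by exact_mod_cast ncne (k+1) (by omega)
  have c2 : (k:ℂ)+2 ≠ 0 := by exact_mod_cast ncne (k+2) (by omega)
  have c3 := fcne k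
  try rw [div_mul_div_comm,
    div_eq_div_iff (mul_ne_zero c2 (mul_ne_zero c1 c3))
      (mul_ne_zero c2 (mul_ne_zero c1 c3))]
  try ring

lemma I4 (k : ℕ) : tc (k+3) = dc k (k+3) := by
  unfold tc dc
  have h1 : k+3-k-3 = 0 := by omega
  have h2 : k+3-2 = k+1 := by omega
  rw [h1, h2, Nat.factorial_zero, mul_one, Nat.factorial_succ k]
  simp only [Nat.cast_mul]
  rw [show ((k+3:ℕ):ℂ) = (k:ℂ)+3 by push_cast; ring,
    show ((k+1:ℕ):ℂ) = (k:ℂ)+1 by push_cast; ring,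
    show (k:ℂ)+3-2 = (k:ℂ)+1 by ring]
  have c1 : (k:ℂ)+1 ≠ 0 := by exact_mod_cast ncne (k+1) (by omega)
  have c3 := fcne k
  rw [div_eq_div_iff c1 (mul_ne_zero c1 c3)]
  ring

lemma I5 (k : ℕ) : tc (k+4) * dc k (k+3) = dc k (k+4) := by
  unfold tc dc
  have h1 : k+3-k-3 = 0 := by omega
  have h2 : k+3-2 = k+1 := by omega
  have h3 : k+4-k-3 = 1 := by omega
  have h4 : k+4-2 = k+2 := by omega
  rw [h1, h2, h3, h4, Nat.factorial_zero, mul_one, Nat.factorial_one,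
    show k+2 = k+1+1 from rfl, Nat.factorial_succ (k+1), Nat.factorial_succ k]
  simp only [Nat.cast_mul]
  rw [show ((k+4:ℕ):ℂ) = (k:ℂ)+4 by push_cast; ring,
    show ((k+1+1:ℕ):ℂ) = (k:ℂ)+2 by push_cast; ring,
    show ((k+1:ℕ):ℂ) = (k:ℂ)+1 by push_cast; ring,
    show (k:ℂ)+4-2 = (k:ℂ)+2 by ring]
  have c1 : (k:ℂ)+1 ≠ 0 := by exact_mod_cast ncne (k+1) (by omega)
  have c2 : (k:ℂ)+2 ≠ 0 := by exact_mod_cast ncne (k+2) (by omega)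
  have c3 := fcne k
  rw [div_mul_div_comm, one_mul,
    div_eq_div_iff (mul_ne_zero c2 (mul_ne_zero c1 c3))
      (mul_ne_zero c2 (mul_ne_zero c1 c3))]
  ring

lemma I6 (k j : ℕ) : tc (k+5+j) * dc k (k+4+j) = dc k (k+5+j) * tc (j+4) := by
  unfold tc dc
  have h1 : k+4+j-k-3 = j+1 := by omega
  have h2 : k+4+j-2 = k+2+j := by omega
  have h3 : k+5+j-k-3 = j+2 := by omega
  have h4 : k+5+j-2 = k+3+j := by omega
  rw [h1, h2, h3, h4]
  rw [show k+3+j = (k+2+j)+1 by omega, Nat.factorial_succ (k+2+j),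
    Nat.factorial_succ (j+1), Nat.factorial_succ j]
  simp only [Nat.cast_mul]
  rw [show ((k+5+j:ℕ):ℂ) = (k:ℂ)+5+(j:ℂ) by push_cast; ring,
    show ((j+4:ℕ):ℂ) = (j:ℂ)+4 by push_cast; ring,
    show ((k+2+j+1:ℕ):ℂ) = (k:ℂ)+3+(j:ℂ) by push_cast; ring,
    show ((j+1+1:ℕ):ℂ) = (j:ℂ)+2 by push_cast; ring,
    show ((j+1:ℕ):ℂ) = (j:ℂ)+1 by push_cast; ring,
    show (k:ℂ)+5+(j:ℂ)-2 = (k:ℂ)+3+(j:ℂ) by ring,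
    show (j:ℂ)+4-2 = (j:ℂ)+2 by ring]
  have c1 : (k:ℂ)+3+(j:ℂ) ≠ 0 := by exact_mod_cast ncne (k+3+j) (by omega)
  have c2 : (k:ℂ)+2+(j:ℂ) ≠ 0 := by exact_mod_cast ncne (k+2+j) (by omega)
  have c3 : (j:ℂ)+2 ≠ 0 := by exact_mod_cast ncne (j+2) (by omega)
  have c5 := fcne (k+2+j)
  have c6 := fcne j
  have c7 := fcne k
  rw [div_mul_div_comm, div_mul_div_comm, one_mul,
    div_eq_div_iff (mul_ne_zero c1 c5) (mul_ne_zero (mul_ne_zero c1 c5) c3)]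
  ring

lemma I7 (j : ℕ) : sc (j+5) * tc (j+4) - tc (j+5) * sc (j+4) = dc 1 (j+5) := by
  unfold sc tc dc
  have h3 : j+5-1-3 = j+1 := by omega
  have h4 : j+5-2 = j+3 := by omega
  rw [h3, h4, Nat.factorial_one, one_mul,
    show j+3 = (j+2)+1 from rfl, Nat.factorial_succ (j+2),
    show j+2 = (j+1)+1 from rfl, Nat.factorial_succ (j+1)]
  simp only [Nat.cast_mul]
  rw [show ((j+5:ℕ):ℂ) = (j:ℂ)+5 by push_cast; ring,
    show ((j+4:ℕ):ℂ) = (j:ℂ)+4 by push_cast; ring,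
    show ((j+1+1+1:ℕ):ℂ) = (j:ℂ)+3 by push_cast; ring,
    show ((j+1+1:ℕ):ℂ) = (j:ℂ)+2 by push_cast; ring,
    show (j:ℂ)+5-3 = (j:ℂ)+2 by ring, show (j:ℂ)+5-2 = (j:ℂ)+3 by ring,
    show (j:ℂ)+4-3 = (j:ℂ)+1 by ring, show (j:ℂ)+4-2 = (j:ℂ)+2 by ring]
  have c1 : (j:ℂ)+1 ≠ 0 := by exact_mod_cast ncne (j+1) (by omega)
  have c2 : (j:ℂ)+2 ≠ 0 := by exact_mod_cast ncne (j+2) (by omega)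
  have c3 : (j:ℂ)+3 ≠ 0 := by exact_mod_cast ncne (j+3) (by omega)
  have c6 := fcne (j+1)
  rw [div_mul_div_comm, div_mul_div_comm,
    div_sub_div _ _ (mul_ne_zero c3 c2) (mul_ne_zero c3 c2),
    div_eq_div_iff (mul_ne_zero (mul_ne_zero c3 c2) (mul_ne_zero c3 c2))
      (mul_ne_zero c3 (mul_ne_zero c2 c6))]
  ring

lemma I8 : sc 4 = dc 1 4 := by
  unfold sc dc
  norm_num [Nat.factorial]


variable {n : ℕ}

def e (n x y : ℕ) : Matrix (Fin (n+1)) (Fin (n+1)) ℂ := E n x y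

lemma fin_cast_inj {x y : ℕ} (hx : x < n+1) (hy : y < n+1) :
    ((x : Fin (n+1)) = (y : Fin (n+1))) ↔ x = y := by
  rw [Fin.ext_iff, Fin.val_natCast, Fin.val_natCast, Nat.mod_eq_of_lt hx, Nat.mod_eq_of_lt hy]

lemma e_mul_e_of_eq {y z : ℕ} (x w : ℕ) (h : y = z) : e n x y * e n z w = e n x w := by
  subst h
  unfold e E
  rw [Matrix.single_mul_single_same, one_mul]

lemma e_mul_e_of_ne {y z : ℕ} (x w : ℕ) (hy : y < n+1) (hz : z < n+1) (h : y ≠ z) :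
    e n x y * e n z w = 0 := by
  unfold e E
  rw [Matrix.single_mul_single_of_ne]
  exact fun hc => h ((fin_cast_inj hy hz).mp hc)

lemma e_mul_sum {x y : ℕ} (s : Finset ℕ) (c : ℕ → ℂ) (f g : ℕ → ℕ)
    (hy : y < n+1) (hf : ∀ r ∈ s, f r < n+1) (h : ∀ r ∈ s, y ≠ f r) :
    e n x y * (∑ r ∈ s, c r • e n (f r) (g r)) = 0 := by
  rw [Finset.mul_sum]
  refine Finset.sum_eq_zero fun r hr => ?_
  rw [mul_smul_comm, e_mul_e_of_ne x (g r) hy (hf r hr) (h r hr), smul_zero]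

lemma sum_mul_e {x y : ℕ} (s : Finset ℕ) (c : ℕ → ℂ) (f g : ℕ → ℕ)
    (hx : x < n+1) (hg : ∀ r ∈ s, g r < n+1) (h : ∀ r ∈ s, g r ≠ x) :
    (∑ r ∈ s, c r • e n (f r) (g r)) * e n x y = 0 := by
  rw [Finset.sum_mul]
  refine Finset.sum_eq_zero fun r hr => ?_
  rw [smul_mul_assoc, e_mul_e_of_ne (f r) y (hg r hr) hx (h r hr), smul_zero]

lemma e_mul_sum_single {x y r₀ : ℕ} (s : Finset ℕ) (c : ℕ → ℂ) (f g : ℕ → ℕ)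
    (hy : y < n+1) (hf : ∀ r ∈ s, f r < n+1) (hr₀ : r₀ ∈ s)
    (h : ∀ r ∈ s, y = f r ↔ r = r₀) :
    e n x y * (∑ r ∈ s, c r • e n (f r) (g r)) = c r₀ • e n x (g r₀) := by
  rw [Finset.mul_sum, Finset.sum_eq_single r₀]
  · rw [mul_smul_comm, e_mul_e_of_eq x (g r₀) ((h r₀ hr₀).mpr rfl)]
  · intro r hr hne
    rw [mul_smul_comm, e_mul_e_of_ne x (g r) hy (hf r hr) (fun hc => hne ((h r hr).mp hc)),
      smul_zero]
  · exact fun hc => absurd hr₀ hc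

lemma sum_mul_e_single {x y r₀ : ℕ} (s : Finset ℕ) (c : ℕ → ℂ) (f g : ℕ → ℕ)
    (hx : x < n+1) (hg : ∀ r ∈ s, g r < n+1) (hr₀ : r₀ ∈ s)
    (h : ∀ r ∈ s, g r = x ↔ r = r₀) :
    (∑ r ∈ s, c r • e n (f r) (g r)) * e n x y = c r₀ • e n (f r₀) y := by
  rw [Finset.sum_mul, Finset.sum_eq_single r₀]
  · rw [smul_mul_assoc, e_mul_e_of_eq (f r₀) y ((h r₀ hr₀).mpr rfl)]
  · intro r hr hne
    rw [smul_mul_assoc, e_mul_e_of_ne (f r) y (hg r hr) hx (fun hc => hne ((h r hr).mp hc)),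
      smul_zero]
  · exact fun hc => absurd hr₀ hc

lemma sum_mul_sum (s t : Finset ℕ) (c c' : ℕ → ℂ) (f g f' g' : ℕ → ℕ) (φ : ℕ → ℕ)
    (hg : ∀ r ∈ s, g r < n+1) (hf' : ∀ m ∈ t, f' m < n+1)
    (hφ : ∀ r ∈ s, ∀ m ∈ t, (g r = f' m ↔ m = φ r)) :
    (∑ r ∈ s, c r • e n (f r) (g r)) * (∑ m ∈ t, c' m • e n (f' m) (g' m)) =
      ∑ r ∈ s, (if φ r ∈ t then (c r * c' (φ r)) • e n (f r) (g' (φ r)) else 0) := by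
  rw [Finset.sum_mul]
  refine Finset.sum_congr rfl fun r hr => ?_
  rw [Finset.mul_sum]
  rw [show (∑ m ∈ t, c r • e n (f r) (g r) * (c' m • e n (f' m) (g' m)))
      = ∑ m ∈ t, (if m = φ r then (c r * c' m) • e n (f r) (g' m) else 0) from
    Finset.sum_congr rfl fun m hm => by
      by_cases hc : g r = f' m
      · rw [if_pos ((hφ r hr m hm).mp hc), smul_mul_smul_comm,
          e_mul_e_of_eq _ _ hc]
      · rw [if_neg (fun hc2 => hc ((hφ r hr m hm).mpr hc2))]
        rw [smul_mul_assoc, mul_smul_comm, e_mul_e_of_ne _ _ (hg r hr) (hf' m hm) hc,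
          smul_zero, smul_zero]]
  exact Finset.sum_ite_eq' t (φ r) fun m => (c r * c' m) • e n (f r) (g' m)

/-- the "P" block. -/
def Pm (n : ℕ) : Matrix (Fin (n+1)) (Fin (n+1)) ℂ := e n 0 0 + e n 0 1 + e n 1 0 + e n 1 1

/-- Closed form for the iterated brackets, `1 ≤ k ≤ n-2`. -/
def Bm (n k : ℕ) : Matrix (Fin (n+1)) (Fin (n+1)) ℂ :=
  e n (k+1) n + (∑ m ∈ Finset.Icc (k+4) n, dc k m • e n (m-1) (m-k-2))
    + (if k+3 ≤ n then dc k (k+3) • (e n (k+2) 1 - e n (k+2) 0) else 0)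

lemma Y1_eq (a α β : ℂ) :
    Y1 n a α β = a • Pm n + e n 0 n
      + (∑ r ∈ Finset.Icc 4 n, sc r • e n (r-1) (r-2))
      + α • e n (n-1) 0 + β • e n (n-1) 1 := by
  simp only [Y1, Pm, e, sc, Nat.cast_zero, Nat.cast_one, Nat.cast_ofNat, Fin.natCast_eq_last]

lemma Y2_eq (a α β : ℂ) :
    Y2 n a α β = a • Pm n + e n 1 n - e n 2 0 + e n 2 1
      + (∑ r ∈ Finset.Icc 4 n, tc r • e n (r-1) (r-2))
      + β • e n (n-1) 0 + α • e n (n-1) 1 := by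
  simp only [Y2, Pm, e, tc, Nat.cast_zero, Nat.cast_one, Nat.cast_ofNat, Fin.natCast_eq_last]

section withHn
variable (hn : 4 ≤ n)
include hn

lemma Pm_mul_e {y : ℕ} (w : ℕ) (h2 : 2 ≤ y) (hyn : y ≤ n) : Pm n * e n y w = 0 := by
  unfold Pm
  rw [add_mul, add_mul, add_mul,
    e_mul_e_of_ne _ _ (by omega) (by omega) (by omega),
    e_mul_e_of_ne _ _ (by omega) (by omega) (by omega),
    e_mul_e_of_ne _ _ (by omega) (by omega) (by omega),
    e_mul_e_of_ne _ _ (by omega) (by omega) (by omega)]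
  simp

lemma Pm_mul_e0 (w : ℕ) : Pm n * e n 0 w = e n 0 w + e n 1 w := by
  unfold Pm
  rw [add_mul, add_mul, add_mul,
    e_mul_e_of_eq _ _ rfl,
    e_mul_e_of_ne _ _ (by omega) (by omega) (by omega),
    e_mul_e_of_eq _ _ rfl,
    e_mul_e_of_ne _ _ (by omega) (by omega) (by omega)]
  abel

lemma Pm_mul_e1 (w : ℕ) : Pm n * e n 1 w = e n 0 w + e n 1 w := by
  unfold Pm
  rw [add_mul, add_mul, add_mul,
    e_mul_e_of_ne _ _ (by omega) (by omega) (by omega),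
    e_mul_e_of_eq _ _ rfl,
    e_mul_e_of_ne _ _ (by omega) (by omega) (by omega),
    e_mul_e_of_eq _ _ rfl]
  abel

lemma e_mul_Pm {y : ℕ} (x : ℕ) (h2 : 2 ≤ y) (hyn : y ≤ n) : e n x y * Pm n = 0 := by
  unfold Pm
  rw [mul_add, mul_add, mul_add,
    e_mul_e_of_ne _ _ (by omega) (by omega) (by omega),
    e_mul_e_of_ne _ _ (by omega) (by omega) (by omega),
    e_mul_e_of_ne _ _ (by omega) (by omega) (by omega),
    e_mul_e_of_ne _ _ (by omega) (by omega) (by omega)]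
  simp

lemma e0_mul_Pm (x : ℕ) : e n x 0 * Pm n = e n x 0 + e n x 1 := by
  unfold Pm
  rw [mul_add, mul_add, mul_add,
    e_mul_e_of_eq _ _ rfl,
    e_mul_e_of_eq _ _ rfl,
    e_mul_e_of_ne _ _ (by omega) (by omega) (by omega),
    e_mul_e_of_ne _ _ (by omega) (by omega) (by omega)]
  abel

lemma e1_mul_Pm (x : ℕ) : e n x 1 * Pm n = e n x 0 + e n x 1 := by
  unfold Pm
  rw [mul_add, mul_add, mul_add,
    e_mul_e_of_ne _ _ (by omega) (by omega) (by omega),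
    e_mul_e_of_ne _ _ (by omega) (by omega) (by omega),
    e_mul_e_of_eq _ _ rfl,
    e_mul_e_of_eq _ _ rfl]
  abel

lemma Pm_mul_sum (s : Finset ℕ) (c : ℕ → ℂ) (f g : ℕ → ℕ)
    (hf : ∀ r ∈ s, 2 ≤ f r ∧ f r ≤ n) :
    Pm n * (∑ r ∈ s, c r • e n (f r) (g r)) = 0 := by
  unfold Pm
  rw [add_mul, add_mul, add_mul,
    e_mul_sum s c f g (by omega) (fun r hr => by have := hf r hr; omega)
      (fun r hr => by have := hf r hr; omega),
    e_mul_sum s c f g (by omega) (fun r hr => by have := hf r hr; omega)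
      (fun r hr => by have := hf r hr; omega),
    e_mul_sum s c f g (by omega) (fun r hr => by have := hf r hr; omega)
      (fun r hr => by have := hf r hr; omega),
    e_mul_sum s c f g (by omega) (fun r hr => by have := hf r hr; omega)
      (fun r hr => by have := hf r hr; omega)]
  simp

lemma sum_mul_Pm (s : Finset ℕ) (c : ℕ → ℂ) (f g : ℕ → ℕ)
    (hg : ∀ r ∈ s, 2 ≤ g r ∧ g r ≤ n) :
    (∑ r ∈ s, c r • e n (f r) (g r)) * Pm n = 0 := by
  unfold Pm
  rw [mul_add, mul_add, mul_add,
    sum_mul_e s c f g (by omega) (fun r hr => by have := hg r hr; omega)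
      (fun r hr => by have := hg r hr; omega),
    sum_mul_e s c f g (by omega) (fun r hr => by have := hg r hr; omega)
      (fun r hr => by have := hg r hr; omega),
    sum_mul_e s c f g (by omega) (fun r hr => by have := hg r hr; omega)
      (fun r hr => by have := hg r hr; omega),
    sum_mul_e s c f g (by omega) (fun r hr => by have := hg r hr; omega)
      (fun r hr => by have := hg r hr; omega)]
  simp


lemma mem44 : (4:ℕ) ∈ Finset.Icc 4 n := Finset.mem_Icc.mpr ⟨le_refl 4, hn⟩

lemma bra12 (a α β : ℂ) : ⁅Y1 n a α β, Y2 n a α β⁆ = Bm n 1 := by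
  have hb1 : ∀ r ∈ Finset.Icc 4 n, r-1 < n+1 := fun r hr => by
    have := Finset.mem_Icc.mp hr; omega
  have hb2 : ∀ r ∈ Finset.Icc 4 n, r-2 < n+1 := fun r hr => by
    have := Finset.mem_Icc.mp hr; omega
  -- forward products
  have F1 : Pm n * e n 1 n = e n 0 n + e n 1 n := Pm_mul_e1 hn n
  have F2 : Pm n * e n 2 0 = 0 := Pm_mul_e hn 0 (by omega) (by omega)
  have F3 : Pm n * e n 2 1 = 0 := Pm_mul_e hn 1 (by omega) (by omega)
  have F4 : Pm n * (∑ r ∈ Finset.Icc 4 n, tc r • e n (r-1) (r-2)) = 0 :=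
    Pm_mul_sum hn _ _ _ _ (fun r hr => by have := Finset.mem_Icc.mp hr; omega)
  have F5 : Pm n * e n (n-1) 0 = 0 := Pm_mul_e hn 0 (by omega) (by omega)
  have F6 : Pm n * e n (n-1) 1 = 0 := Pm_mul_e hn 1 (by omega) (by omega)
  have F7 : e n 0 n * Pm n = 0 := e_mul_Pm hn 0 (by omega) (by omega)
  have F8 : e n 0 n * e n 1 n = 0 := e_mul_e_of_ne _ _ (by omega) (by omega) (by omega)
  have F9 : e n 0 n * e n 2 0 = 0 := e_mul_e_of_ne _ _ (by omega) (by omega) (by omega)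
  have F10 : e n 0 n * e n 2 1 = 0 := e_mul_e_of_ne _ _ (by omega) (by omega) (by omega)
  have F11 : e n 0 n * (∑ r ∈ Finset.Icc 4 n, tc r • e n (r-1) (r-2)) = 0 :=
    e_mul_sum _ _ _ _ (by omega) hb1 (fun r hr => by have := Finset.mem_Icc.mp hr; omega)
  have F12 : e n 0 n * e n (n-1) 0 = 0 := e_mul_e_of_ne _ _ (by omega) (by omega) (by omega)
  have F13 : e n 0 n * e n (n-1) 1 = 0 := e_mul_e_of_ne _ _ (by omega) (by omega) (by omega)
  have F14 : (∑ r ∈ Finset.Icc 4 n, sc r • e n (r-1) (r-2)) * Pm n = 0 :=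
    sum_mul_Pm hn _ _ _ _ (fun r hr => by have := Finset.mem_Icc.mp hr; omega)
  have F15 : (∑ r ∈ Finset.Icc 4 n, sc r • e n (r-1) (r-2)) * e n 1 n = 0 :=
    sum_mul_e _ _ _ _ (by omega) hb2 (fun r hr => by have := Finset.mem_Icc.mp hr; omega)
  have F16 : (∑ r ∈ Finset.Icc 4 n, sc r • e n (r-1) (r-2)) * e n 2 0 = sc 4 • e n 3 0 := by
    have := sum_mul_e_single (x := 2) (y := 0) (r₀ := 4) (Finset.Icc 4 n) sc (·-1) (·-2)
      (by omega) hb2 (mem44 hn)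
      (fun r hr => by have := Finset.mem_Icc.mp hr; show r - 2 = 2 ↔ r = 4; omega)
    simpa using this
  have F17 : (∑ r ∈ Finset.Icc 4 n, sc r • e n (r-1) (r-2)) * e n 2 1 = sc 4 • e n 3 1 := by
    have := sum_mul_e_single (x := 2) (y := 1) (r₀ := 4) (Finset.Icc 4 n) sc (·-1) (·-2)
      (by omega) hb2 (mem44 hn)
      (fun r hr => by have := Finset.mem_Icc.mp hr; show r - 2 = 2 ↔ r = 4; omega)
    simpa using this
  have F18 : (∑ r ∈ Finset.Icc 4 n, sc r • e n (r-1) (r-2))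
      * (∑ r ∈ Finset.Icc 4 n, tc r • e n (r-1) (r-2))
      = ∑ r ∈ Finset.Icc 5 n, (sc r * tc (r-1)) • e n (r-1) (r-1-2) := by
    rw [sum_mul_sum (Finset.Icc 4 n) (Finset.Icc 4 n) sc tc (·-1) (·-2) (·-1) (·-2) (·-1)
      hb2 hb1 (fun r hr m hm => by
        have := Finset.mem_Icc.mp hr; have := Finset.mem_Icc.mp hm
        show r - 2 = m - 1 ↔ m = r - 1; omega)]
    show (∑ r ∈ Finset.Icc 4 n, if r-1 ∈ Finset.Icc 4 n
        then (sc r * tc (r-1)) • e n (r-1) (r-1-2) else 0) = _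
    rw [← Finset.sum_filter]
    congr 1
    ext x
    simp only [Finset.mem_filter, Finset.mem_Icc]
    omega
  have F19 : (∑ r ∈ Finset.Icc 4 n, sc r • e n (r-1) (r-2)) * e n (n-1) 0 = 0 :=
    sum_mul_e _ _ _ _ (by omega) hb2 (fun r hr => by have := Finset.mem_Icc.mp hr; omega)
  have F20 : (∑ r ∈ Finset.Icc 4 n, sc r • e n (r-1) (r-2)) * e n (n-1) 1 = 0 :=
    sum_mul_e _ _ _ _ (by omega) hb2 (fun r hr => by have := Finset.mem_Icc.mp hr; omega)
  have F21 : e n (n-1) 0 * Pm n = e n (n-1) 0 + e n (n-1) 1 := e0_mul_Pm hn _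
  have F22 : e n (n-1) 0 * e n 1 n = 0 := e_mul_e_of_ne _ _ (by omega) (by omega) (by omega)
  have F23 : e n (n-1) 0 * e n 2 0 = 0 := e_mul_e_of_ne _ _ (by omega) (by omega) (by omega)
  have F24 : e n (n-1) 0 * e n 2 1 = 0 := e_mul_e_of_ne _ _ (by omega) (by omega) (by omega)
  have F25 : e n (n-1) 0 * (∑ r ∈ Finset.Icc 4 n, tc r • e n (r-1) (r-2)) = 0 :=
    e_mul_sum _ _ _ _ (by omega) hb1 (fun r hr => by have := Finset.mem_Icc.mp hr; omega)
  have F26 : e n (n-1) 0 * e n (n-1) 0 = 0 := e_mul_e_of_ne _ _ (by omega) (by omega) (by omega)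
  have F27 : e n (n-1) 0 * e n (n-1) 1 = 0 := e_mul_e_of_ne _ _ (by omega) (by omega) (by omega)
  have F28 : e n (n-1) 1 * Pm n = e n (n-1) 0 + e n (n-1) 1 := e1_mul_Pm hn _
  have F29 : e n (n-1) 1 * e n 1 n = e n (n-1) n := e_mul_e_of_eq _ _ rfl
  have F30 : e n (n-1) 1 * e n 2 0 = 0 := e_mul_e_of_ne _ _ (by omega) (by omega) (by omega)
  have F31 : e n (n-1) 1 * e n 2 1 = 0 := e_mul_e_of_ne _ _ (by omega) (by omega) (by omega)
  have F32 : e n (n-1) 1 * (∑ r ∈ Finset.Icc 4 n, tc r • e n (r-1) (r-2)) = 0 :=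
    e_mul_sum _ _ _ _ (by omega) hb1 (fun r hr => by have := Finset.mem_Icc.mp hr; omega)
  have F33 : e n (n-1) 1 * e n (n-1) 0 = 0 := e_mul_e_of_ne _ _ (by omega) (by omega) (by omega)
  have F34 : e n (n-1) 1 * e n (n-1) 1 = 0 := e_mul_e_of_ne _ _ (by omega) (by omega) (by omega)
  -- backward products
  have G1 : Pm n * e n 0 n = e n 0 n + e n 1 n := Pm_mul_e0 hn n
  have G2 : Pm n * (∑ r ∈ Finset.Icc 4 n, sc r • e n (r-1) (r-2)) = 0 :=
    Pm_mul_sum hn _ _ _ _ (fun r hr => by have := Finset.mem_Icc.mp hr; omega)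
  have G3 : e n 1 n * Pm n = 0 := e_mul_Pm hn 1 (by omega) (by omega)
  have G4 : e n 1 n * e n 0 n = 0 := e_mul_e_of_ne _ _ (by omega) (by omega) (by omega)
  have G5 : e n 1 n * (∑ r ∈ Finset.Icc 4 n, sc r • e n (r-1) (r-2)) = 0 :=
    e_mul_sum _ _ _ _ (by omega) hb1 (fun r hr => by have := Finset.mem_Icc.mp hr; omega)
  have G6 : e n 1 n * e n (n-1) 0 = 0 := e_mul_e_of_ne _ _ (by omega) (by omega) (by omega)
  have G7 : e n 1 n * e n (n-1) 1 = 0 := e_mul_e_of_ne _ _ (by omega) (by omega) (by omega)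
  have G8 : e n 2 0 * Pm n = e n 2 0 + e n 2 1 := e0_mul_Pm hn _
  have G9 : e n 2 0 * e n 0 n = e n 2 n := e_mul_e_of_eq _ _ rfl
  have G10 : e n 2 0 * (∑ r ∈ Finset.Icc 4 n, sc r • e n (r-1) (r-2)) = 0 :=
    e_mul_sum _ _ _ _ (by omega) hb1 (fun r hr => by have := Finset.mem_Icc.mp hr; omega)
  have G11 : e n 2 0 * e n (n-1) 0 = 0 := e_mul_e_of_ne _ _ (by omega) (by omega) (by omega)
  have G12 : e n 2 0 * e n (n-1) 1 = 0 := e_mul_e_of_ne _ _ (by omega) (by omega) (by omega)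
  have G13 : e n 2 1 * Pm n = e n 2 0 + e n 2 1 := e1_mul_Pm hn _
  have G14 : e n 2 1 * e n 0 n = 0 := e_mul_e_of_ne _ _ (by omega) (by omega) (by omega)
  have G15 : e n 2 1 * (∑ r ∈ Finset.Icc 4 n, sc r • e n (r-1) (r-2)) = 0 :=
    e_mul_sum _ _ _ _ (by omega) hb1 (fun r hr => by have := Finset.mem_Icc.mp hr; omega)
  have G16 : e n 2 1 * e n (n-1) 0 = 0 := e_mul_e_of_ne _ _ (by omega) (by omega) (by omega)
  have G17 : e n 2 1 * e n (n-1) 1 = 0 := e_mul_e_of_ne _ _ (by omega) (by omega) (by omega)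
  have G18 : (∑ r ∈ Finset.Icc 4 n, tc r • e n (r-1) (r-2)) * Pm n = 0 :=
    sum_mul_Pm hn _ _ _ _ (fun r hr => by have := Finset.mem_Icc.mp hr; omega)
  have G19 : (∑ r ∈ Finset.Icc 4 n, tc r • e n (r-1) (r-2)) * e n 0 n = 0 :=
    sum_mul_e _ _ _ _ (by omega) hb2 (fun r hr => by have := Finset.mem_Icc.mp hr; omega)
  have G20 : (∑ r ∈ Finset.Icc 4 n, tc r • e n (r-1) (r-2))
      * (∑ r ∈ Finset.Icc 4 n, sc r • e n (r-1) (r-2))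
      = ∑ r ∈ Finset.Icc 5 n, (tc r * sc (r-1)) • e n (r-1) (r-1-2) := by
    rw [sum_mul_sum (Finset.Icc 4 n) (Finset.Icc 4 n) tc sc (·-1) (·-2) (·-1) (·-2) (·-1)
      hb2 hb1 (fun r hr m hm => by
        have := Finset.mem_Icc.mp hr; have := Finset.mem_Icc.mp hm
        show r - 2 = m - 1 ↔ m = r - 1; omega)]
    show (∑ r ∈ Finset.Icc 4 n, if r-1 ∈ Finset.Icc 4 n
        then (tc r * sc (r-1)) • e n (r-1) (r-1-2) else 0) = _
    rw [← Finset.sum_filter]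
    congr 1
    ext x
    simp only [Finset.mem_filter, Finset.mem_Icc]
    omega
  have G21 : (∑ r ∈ Finset.Icc 4 n, tc r • e n (r-1) (r-2)) * e n (n-1) 0 = 0 :=
    sum_mul_e _ _ _ _ (by omega) hb2 (fun r hr => by have := Finset.mem_Icc.mp hr; omega)
  have G22 : (∑ r ∈ Finset.Icc 4 n, tc r • e n (r-1) (r-2)) * e n (n-1) 1 = 0 :=
    sum_mul_e _ _ _ _ (by omega) hb2 (fun r hr => by have := Finset.mem_Icc.mp hr; omega)
  have G23 : e n (n-1) 0 * e n 0 n = e n (n-1) n := e_mul_e_of_eq _ _ rfl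
  have G24 : e n (n-1) 1 * e n 0 n = 0 := e_mul_e_of_ne _ _ (by omega) (by omega) (by omega)
  have G25 : e n (n-1) 0 * (∑ r ∈ Finset.Icc 4 n, sc r • e n (r-1) (r-2)) = 0 :=
    e_mul_sum _ _ _ _ (by omega) hb1 (fun r hr => by have := Finset.mem_Icc.mp hr; omega)
  have G26 : e n (n-1) 1 * (∑ r ∈ Finset.Icc 4 n, sc r • e n (r-1) (r-2)) = 0 :=
    e_mul_sum _ _ _ _ (by omega) hb1 (fun r hr => by have := Finset.mem_Icc.mp hr; omega)
  -- expand
  rw [Ring.lie_def, Y1_eq, Y2_eq]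
  simp only [add_mul, sub_mul, mul_add, mul_sub, smul_mul_assoc, mul_smul_comm]
  rw [F1, F2, F3, F4, F5, F6, F7, F8, F9, F10, F11, F12, F13, F14, F15, F16, F17, F18,
    F19, F20, F21, F22, F23, F24, F25, F26, F27, F28, F29, F30, F31, F32, F33, F34,
    G1, G2, G3, G4, G5, G6, G7, G8, G9, G10, G11, G12, G13, G14, G15, G16, G17, G18,
    G19, G20, G21, G22, G23, G24, G25, G26]
  -- assemble
  unfold Bm
  rw [if_pos (show 1+3 ≤ n by omega)]
  rw [show (1:ℕ)+4 = 5 by norm_num, show (1:ℕ)+3 = 4 by norm_num,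
    show (1:ℕ)+2 = 3 by norm_num, show (1:ℕ)+1 = 2 by norm_num]
  have hcoef : (∑ m ∈ Finset.Icc 5 n, dc 1 m • e n (m-1) (m-1-2))
      = (∑ m ∈ Finset.Icc 5 n, (sc m * tc (m-1)) • e n (m-1) (m-1-2))
        - (∑ m ∈ Finset.Icc 5 n, (tc m * sc (m-1)) • e n (m-1) (m-1-2)) := by
    rw [← Finset.sum_sub_distrib]
    refine Finset.sum_congr rfl fun m hm => ?_
    have hm' := Finset.mem_Icc.mp hm
    obtain ⟨j, rfl⟩ : ∃ j, m = j+5 := ⟨m-5, by omega⟩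
    rw [← sub_smul, show j+5-1 = j+4 by omega, I7 j]
  rw [hcoef, ← I8]
  simp only [smul_zero, mul_zero, zero_mul, smul_add, smul_sub, add_zero, zero_add,
    sub_zero, zero_sub, smul_neg]
  module


lemma braStep (a α β : ℂ) (k : ℕ) (hk : 1 ≤ k) (hk3 : k+3 ≤ n) :
    ⁅Y1 n a α β, Bm n k⁆ = Bm n (k+1) := by
  have hb1 : ∀ r ∈ Finset.Icc 4 n, r-1 < n+1 := fun r hr => by
    have := Finset.mem_Icc.mp hr; omega
  have hb2 : ∀ r ∈ Finset.Icc 4 n, r-2 < n+1 := fun r hr => by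
    have := Finset.mem_Icc.mp hr; omega
  have hg1 : ∀ m ∈ Finset.Icc (k+4) n, m-1 < n+1 := fun m hm => by
    have := Finset.mem_Icc.mp hm; omega
  have hg2 : ∀ m ∈ Finset.Icc (k+4) n, m-k-2 < n+1 := fun m hm => by
    have := Finset.mem_Icc.mp hm; omega
  -- forward
  have F1 : Pm n * e n (k+1) n = 0 := Pm_mul_e hn n (by omega) (by omega)
  have F2 : Pm n * (∑ m ∈ Finset.Icc (k+4) n, dc k m • e n (m-1) (m-k-2)) = 0 :=
    Pm_mul_sum hn _ _ _ _ (fun m hm => by have := Finset.mem_Icc.mp hm; omega)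
  have F3 : Pm n * e n (k+2) 1 = 0 := Pm_mul_e hn 1 (by omega) (by omega)
  have F4 : Pm n * e n (k+2) 0 = 0 := Pm_mul_e hn 0 (by omega) (by omega)
  have F5 : e n 0 n * e n (k+1) n = 0 := e_mul_e_of_ne _ _ (by omega) (by omega) (by omega)
  have F6 : e n 0 n * (∑ m ∈ Finset.Icc (k+4) n, dc k m • e n (m-1) (m-k-2)) = 0 :=
    e_mul_sum _ _ _ _ (by omega) hg1 (fun m hm => by have := Finset.mem_Icc.mp hm; omega)
  have F7 : e n 0 n * e n (k+2) 1 = 0 := e_mul_e_of_ne _ _ (by omega) (by omega) (by omega)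
  have F8 : e n 0 n * e n (k+2) 0 = 0 := e_mul_e_of_ne _ _ (by omega) (by omega) (by omega)
  have F9 : (∑ r ∈ Finset.Icc 4 n, sc r • e n (r-1) (r-2)) * e n (k+1) n
      = sc (k+3) • e n (k+2) n := by
    have := sum_mul_e_single (x := k+1) (y := n) (r₀ := k+3) (Finset.Icc 4 n) sc (·-1) (·-2)
      (by omega) hb2 (Finset.mem_Icc.mpr ⟨by omega, by omega⟩)
      (fun r hr => by have := Finset.mem_Icc.mp hr; show r - 2 = k+1 ↔ r = k+3; omega)
    simpa only [show k+3-1 = k+2 from by omega] using this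
  have F10 : (∑ r ∈ Finset.Icc 4 n, sc r • e n (r-1) (r-2))
      * (∑ m ∈ Finset.Icc (k+4) n, dc k m • e n (m-1) (m-k-2))
      = ∑ r ∈ Finset.Icc (k+5) n, (sc r * dc k (r-1)) • e n (r-1) (r-1-k-2) := by
    rw [sum_mul_sum (Finset.Icc 4 n) (Finset.Icc (k+4) n) sc (dc k) (·-1) (·-2) (·-1)
      (fun m => m-k-2) (·-1) hb2 hg1 (fun r hr m hm => by
        have := Finset.mem_Icc.mp hr; have := Finset.mem_Icc.mp hm
        show r - 2 = m - 1 ↔ m = r - 1; omega)]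
    show (∑ r ∈ Finset.Icc 4 n, if r-1 ∈ Finset.Icc (k+4) n
        then (sc r * dc k (r-1)) • e n (r-1) (r-1-k-2) else 0) = _
    rw [← Finset.sum_filter]
    congr 1
    ext x
    simp only [Finset.mem_filter, Finset.mem_Icc]
    omega
  have F11a : (∑ r ∈ Finset.Icc 4 n, sc r • e n (r-1) (r-2)) * e n (k+2) 1
      = if k+4 ≤ n then sc (k+4) • e n (k+3) 1 else 0 := by
    by_cases hk4 : k+4 ≤ n
    · have := sum_mul_e_single (x := k+2) (y := 1) (r₀ := k+4) (Finset.Icc 4 n) sc (·-1) (·-2)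
        (by omega) hb2 (Finset.mem_Icc.mpr ⟨by omega, by omega⟩)
        (fun r hr => by have := Finset.mem_Icc.mp hr; show r - 2 = k+2 ↔ r = k+4; omega)
      rw [if_pos hk4]
      simpa only [show k+4-1 = k+3 from by omega] using this
    · rw [if_neg hk4]
      exact sum_mul_e _ _ _ _ (by omega) hb2
        (fun r hr => by have := Finset.mem_Icc.mp hr; omega)
  have F11b : (∑ r ∈ Finset.Icc 4 n, sc r • e n (r-1) (r-2)) * e n (k+2) 0
      = if k+4 ≤ n then sc (k+4) • e n (k+3) 0 else 0 := by
    by_cases hk4 : k+4 ≤ n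
    · have := sum_mul_e_single (x := k+2) (y := 0) (r₀ := k+4) (Finset.Icc 4 n) sc (·-1) (·-2)
        (by omega) hb2 (Finset.mem_Icc.mpr ⟨by omega, by omega⟩)
        (fun r hr => by have := Finset.mem_Icc.mp hr; show r - 2 = k+2 ↔ r = k+4; omega)
      rw [if_pos hk4]
      simpa only [show k+4-1 = k+3 from by omega] using this
    · rw [if_neg hk4]
      exact sum_mul_e _ _ _ _ (by omega) hb2
        (fun r hr => by have := Finset.mem_Icc.mp hr; omega)
  have F12 : e n (n-1) 0 * e n (k+1) n = 0 := e_mul_e_of_ne _ _ (by omega) (by omega) (by omega)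
  have F13 : e n (n-1) 0 * (∑ m ∈ Finset.Icc (k+4) n, dc k m • e n (m-1) (m-k-2)) = 0 :=
    e_mul_sum _ _ _ _ (by omega) hg1 (fun m hm => by have := Finset.mem_Icc.mp hm; omega)
  have F14 : e n (n-1) 0 * e n (k+2) 1 = 0 := e_mul_e_of_ne _ _ (by omega) (by omega) (by omega)
  have F15 : e n (n-1) 0 * e n (k+2) 0 = 0 := e_mul_e_of_ne _ _ (by omega) (by omega) (by omega)
  have F16 : e n (n-1) 1 * e n (k+1) n = 0 := e_mul_e_of_ne _ _ (by omega) (by omega) (by omega)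
  have F17 : e n (n-1) 1 * (∑ m ∈ Finset.Icc (k+4) n, dc k m • e n (m-1) (m-k-2)) = 0 :=
    e_mul_sum _ _ _ _ (by omega) hg1 (fun m hm => by have := Finset.mem_Icc.mp hm; omega)
  have F18 : e n (n-1) 1 * e n (k+2) 1 = 0 := e_mul_e_of_ne _ _ (by omega) (by omega) (by omega)
  have F19 : e n (n-1) 1 * e n (k+2) 0 = 0 := e_mul_e_of_ne _ _ (by omega) (by omega) (by omega)
  -- backward
  have G1 : e n (k+1) n * Pm n = 0 := e_mul_Pm hn _ (by omega) (by omega)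
  have G2 : e n (k+1) n * e n 0 n = 0 := e_mul_e_of_ne _ _ (by omega) (by omega) (by omega)
  have G3 : e n (k+1) n * (∑ r ∈ Finset.Icc 4 n, sc r • e n (r-1) (r-2)) = 0 :=
    e_mul_sum _ _ _ _ (by omega) hb1 (fun r hr => by have := Finset.mem_Icc.mp hr; omega)
  have G4 : e n (k+1) n * e n (n-1) 0 = 0 := e_mul_e_of_ne _ _ (by omega) (by omega) (by omega)
  have G5 : e n (k+1) n * e n (n-1) 1 = 0 := e_mul_e_of_ne _ _ (by omega) (by omega) (by omega)
  have G6 : (∑ m ∈ Finset.Icc (k+4) n, dc k m • e n (m-1) (m-k-2)) * Pm n = 0 :=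
    sum_mul_Pm hn _ _ _ _ (fun m hm => by have := Finset.mem_Icc.mp hm; omega)
  have G7 : (∑ m ∈ Finset.Icc (k+4) n, dc k m • e n (m-1) (m-k-2)) * e n 0 n = 0 :=
    sum_mul_e _ _ _ _ (by omega) hg2 (fun m hm => by have := Finset.mem_Icc.mp hm; omega)
  have G8 : (∑ m ∈ Finset.Icc (k+4) n, dc k m • e n (m-1) (m-k-2))
      * (∑ r ∈ Finset.Icc 4 n, sc r • e n (r-1) (r-2))
      = ∑ m ∈ Finset.Icc (k+5) n, (dc k m * sc (m-k-1)) • e n (m-1) (m-k-1-2) := by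
    rw [sum_mul_sum (Finset.Icc (k+4) n) (Finset.Icc 4 n) (dc k) sc (·-1)
      (fun m => m-k-2) (·-1) (·-2) (fun m => m-k-1) hg2 hb1 (fun m hm r hr => by
        have := Finset.mem_Icc.mp hr; have := Finset.mem_Icc.mp hm
        show m - k - 2 = r - 1 ↔ r = m - k - 1; omega)]
    show (∑ m ∈ Finset.Icc (k+4) n, if m-k-1 ∈ Finset.Icc 4 n
        then (dc k m * sc (m-k-1)) • e n (m-1) (m-k-1-2) else 0) = _
    rw [← Finset.sum_filter]
    congr 1
    ext x
    simp only [Finset.mem_filter, Finset.mem_Icc]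
    omega
  have G9 : (∑ m ∈ Finset.Icc (k+4) n, dc k m • e n (m-1) (m-k-2)) * e n (n-1) 0 = 0 :=
    sum_mul_e _ _ _ _ (by omega) hg2 (fun m hm => by have := Finset.mem_Icc.mp hm; omega)
  have G10 : (∑ m ∈ Finset.Icc (k+4) n, dc k m • e n (m-1) (m-k-2)) * e n (n-1) 1 = 0 :=
    sum_mul_e _ _ _ _ (by omega) hg2 (fun m hm => by have := Finset.mem_Icc.mp hm; omega)
  have G11 : e n (k+2) 1 * Pm n = e n (k+2) 0 + e n (k+2) 1 := e1_mul_Pm hn _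
  have G12 : e n (k+2) 0 * Pm n = e n (k+2) 0 + e n (k+2) 1 := e0_mul_Pm hn _
  have G13 : e n (k+2) 1 * e n 0 n = 0 := e_mul_e_of_ne _ _ (by omega) (by omega) (by omega)
  have G14 : e n (k+2) 0 * e n 0 n = e n (k+2) n := e_mul_e_of_eq _ _ rfl
  have G15 : e n (k+2) 1 * (∑ r ∈ Finset.Icc 4 n, sc r • e n (r-1) (r-2)) = 0 :=
    e_mul_sum _ _ _ _ (by omega) hb1 (fun r hr => by have := Finset.mem_Icc.mp hr; omega)
  have G16 : e n (k+2) 0 * (∑ r ∈ Finset.Icc 4 n, sc r • e n (r-1) (r-2)) = 0 :=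
    e_mul_sum _ _ _ _ (by omega) hb1 (fun r hr => by have := Finset.mem_Icc.mp hr; omega)
  have G17 : e n (k+2) 1 * e n (n-1) 0 = 0 := e_mul_e_of_ne _ _ (by omega) (by omega) (by omega)
  have G18 : e n (k+2) 0 * e n (n-1) 0 = 0 := e_mul_e_of_ne _ _ (by omega) (by omega) (by omega)
  have G19 : e n (k+2) 1 * e n (n-1) 1 = 0 := e_mul_e_of_ne _ _ (by omega) (by omega) (by omega)
  have G20 : e n (k+2) 0 * e n (n-1) 1 = 0 := e_mul_e_of_ne _ _ (by omega) (by omega) (by omega)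
  -- coefficient conversions
  have hI1 : sc (k+3) = 1 - dc k (k+3) := by rw [← I1 k]; ring
  have hIF : (if k+4 ≤ n then dc (k+1) (k+4) • (e n (k+3) 1 - e n (k+3) 0) else 0)
      = dc k (k+3) • ((if k+4 ≤ n then sc (k+4) • e n (k+3) 1 else 0)
        - (if k+4 ≤ n then sc (k+4) • e n (k+3) 0 else 0)) := by
    by_cases hk4 : k+4 ≤ n
    · rw [if_pos hk4, if_pos hk4, if_pos hk4, ← I2 k]
      module
    · rw [if_neg hk4, if_neg hk4, if_neg hk4]
      simp
  have hcoef : (∑ m ∈ Finset.Icc (k+5) n, dc (k+1) m • e n (m-1) (m-(k+1)-2))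
      = (∑ m ∈ Finset.Icc (k+5) n, (sc m * dc k (m-1)) • e n (m-1) (m-1-k-2))
        - (∑ m ∈ Finset.Icc (k+5) n, (dc k m * sc (m-k-1)) • e n (m-1) (m-k-1-2)) := by
    rw [← Finset.sum_sub_distrib]
    refine Finset.sum_congr rfl fun m hm => ?_
    have hm' := Finset.mem_Icc.mp hm
    obtain ⟨j, rfl⟩ : ∃ j, m = k+5+j := ⟨m-(k+5), by omega⟩
    rw [show k+5+j-1-k-2 = k+5+j-(k+1)-2 by omega,
      show k+5+j-k-1-2 = k+5+j-(k+1)-2 by omega, ← sub_smul,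
      show k+5+j-1 = k+4+j by omega, show k+5+j-k-1 = j+4 by omega, I3 k j]
  -- expand
  rw [Ring.lie_def]
  conv_lhs => rw [Y1_eq, Bm, if_pos hk3]
  rw [Bm, show (k+1)+1 = k+2 by omega, show (k+1)+4 = k+5 by omega,
    show (k+1)+3 = k+4 by omega, show (k+1)+2 = k+3 by omega]
  simp only [add_mul, sub_mul, mul_add, mul_sub, smul_mul_assoc, mul_smul_comm]
  rw [F1, F2, F3, F4, F5, F6, F7, F8, F9, F10, F11a, F11b, F12, F13, F14, F15, F16, F17,
    F18, F19,
    G1, G2, G3, G4, G5, G6, G7, G8, G9, G10, G11, G12, G13, G14, G15, G16, G17, G18, G19, G20]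
  rw [hcoef, hI1, hIF]
  simp only [smul_zero, mul_zero, zero_mul, smul_add, smul_sub, add_zero, zero_add,
    sub_zero, zero_sub, smul_neg]
  module


lemma braY2 (a α β : ℂ) (k : ℕ) (hk : 1 ≤ k) (hk3 : k+3 ≤ n) :
    ⁅Y2 n a α β, Bm n k⁆ = 0 := by
  have hb1 : ∀ r ∈ Finset.Icc 4 n, r-1 < n+1 := fun r hr => by
    have := Finset.mem_Icc.mp hr; omega
  have hb2 : ∀ r ∈ Finset.Icc 4 n, r-2 < n+1 := fun r hr => by
    have := Finset.mem_Icc.mp hr; omega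
  have hg1 : ∀ m ∈ Finset.Icc (k+4) n, m-1 < n+1 := fun m hm => by
    have := Finset.mem_Icc.mp hm; omega
  have hg2 : ∀ m ∈ Finset.Icc (k+4) n, m-k-2 < n+1 := fun m hm => by
    have := Finset.mem_Icc.mp hm; omega
  -- forward
  have F1 : Pm n * e n (k+1) n = 0 := Pm_mul_e hn n (by omega) (by omega)
  have F2 : Pm n * (∑ m ∈ Finset.Icc (k+4) n, dc k m • e n (m-1) (m-k-2)) = 0 :=
    Pm_mul_sum hn _ _ _ _ (fun m hm => by have := Finset.mem_Icc.mp hm; omega)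
  have F3 : Pm n * e n (k+2) 1 = 0 := Pm_mul_e hn 1 (by omega) (by omega)
  have F4 : Pm n * e n (k+2) 0 = 0 := Pm_mul_e hn 0 (by omega) (by omega)
  have F5 : e n 1 n * e n (k+1) n = 0 := e_mul_e_of_ne _ _ (by omega) (by omega) (by omega)
  have F6 : e n 1 n * (∑ m ∈ Finset.Icc (k+4) n, dc k m • e n (m-1) (m-k-2)) = 0 :=
    e_mul_sum _ _ _ _ (by omega) hg1 (fun m hm => by have := Finset.mem_Icc.mp hm; omega)
  have F7 : e n 1 n * e n (k+2) 1 = 0 := e_mul_e_of_ne _ _ (by omega) (by omega) (by omega)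
  have F8 : e n 1 n * e n (k+2) 0 = 0 := e_mul_e_of_ne _ _ (by omega) (by omega) (by omega)
  have F5' : e n 2 0 * e n (k+1) n = 0 := e_mul_e_of_ne _ _ (by omega) (by omega) (by omega)
  have F6' : e n 2 0 * (∑ m ∈ Finset.Icc (k+4) n, dc k m • e n (m-1) (m-k-2)) = 0 :=
    e_mul_sum _ _ _ _ (by omega) hg1 (fun m hm => by have := Finset.mem_Icc.mp hm; omega)
  have F7' : e n 2 0 * e n (k+2) 1 = 0 := e_mul_e_of_ne _ _ (by omega) (by omega) (by omega)
  have F8' : e n 2 0 * e n (k+2) 0 = 0 := e_mul_e_of_ne _ _ (by omega) (by omega) (by omega)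
  have F5'' : e n 2 1 * e n (k+1) n = 0 := e_mul_e_of_ne _ _ (by omega) (by omega) (by omega)
  have F6'' : e n 2 1 * (∑ m ∈ Finset.Icc (k+4) n, dc k m • e n (m-1) (m-k-2)) = 0 :=
    e_mul_sum _ _ _ _ (by omega) hg1 (fun m hm => by have := Finset.mem_Icc.mp hm; omega)
  have F7'' : e n 2 1 * e n (k+2) 1 = 0 := e_mul_e_of_ne _ _ (by omega) (by omega) (by omega)
  have F8'' : e n 2 1 * e n (k+2) 0 = 0 := e_mul_e_of_ne _ _ (by omega) (by omega) (by omega)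
  have F9 : (∑ r ∈ Finset.Icc 4 n, tc r • e n (r-1) (r-2)) * e n (k+1) n
      = tc (k+3) • e n (k+2) n := by
    have := sum_mul_e_single (x := k+1) (y := n) (r₀ := k+3) (Finset.Icc 4 n) tc (·-1) (·-2)
      (by omega) hb2 (Finset.mem_Icc.mpr ⟨by omega, by omega⟩)
      (fun r hr => by have := Finset.mem_Icc.mp hr; show r - 2 = k+1 ↔ r = k+3; omega)
    simpa only [show k+3-1 = k+2 from by omega] using this
  have F10 : (∑ r ∈ Finset.Icc 4 n, tc r • e n (r-1) (r-2))
      * (∑ m ∈ Finset.Icc (k+4) n, dc k m • e n (m-1) (m-k-2))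
      = ∑ r ∈ Finset.Icc (k+5) n, (tc r * dc k (r-1)) • e n (r-1) (r-1-k-2) := by
    rw [sum_mul_sum (Finset.Icc 4 n) (Finset.Icc (k+4) n) tc (dc k) (·-1) (·-2) (·-1)
      (fun m => m-k-2) (·-1) hb2 hg1 (fun r hr m hm => by
        have := Finset.mem_Icc.mp hr; have := Finset.mem_Icc.mp hm
        show r - 2 = m - 1 ↔ m = r - 1; omega)]
    show (∑ r ∈ Finset.Icc 4 n, if r-1 ∈ Finset.Icc (k+4) n
        then (tc r * dc k (r-1)) • e n (r-1) (r-1-k-2) else 0) = _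
    rw [← Finset.sum_filter]
    congr 1
    ext x
    simp only [Finset.mem_filter, Finset.mem_Icc]
    omega
  have F11a : (∑ r ∈ Finset.Icc 4 n, tc r • e n (r-1) (r-2)) * e n (k+2) 1
      = if k+4 ≤ n then tc (k+4) • e n (k+3) 1 else 0 := by
    by_cases hk4 : k+4 ≤ n
    · have := sum_mul_e_single (x := k+2) (y := 1) (r₀ := k+4) (Finset.Icc 4 n) tc (·-1) (·-2)
        (by omega) hb2 (Finset.mem_Icc.mpr ⟨by omega, by omega⟩)
        (fun r hr => by have := Finset.mem_Icc.mp hr; show r - 2 = k+2 ↔ r = k+4; omega)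
      rw [if_pos hk4]
      simpa only [show k+4-1 = k+3 from by omega] using this
    · rw [if_neg hk4]
      exact sum_mul_e _ _ _ _ (by omega) hb2
        (fun r hr => by have := Finset.mem_Icc.mp hr; omega)
  have F11b : (∑ r ∈ Finset.Icc 4 n, tc r • e n (r-1) (r-2)) * e n (k+2) 0
      = if k+4 ≤ n then tc (k+4) • e n (k+3) 0 else 0 := by
    by_cases hk4 : k+4 ≤ n
    · have := sum_mul_e_single (x := k+2) (y := 0) (r₀ := k+4) (Finset.Icc 4 n) tc (·-1) (·-2)
        (by omega) hb2 (Finset.mem_Icc.mpr ⟨by omega, by omega⟩)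
        (fun r hr => by have := Finset.mem_Icc.mp hr; show r - 2 = k+2 ↔ r = k+4; omega)
      rw [if_pos hk4]
      simpa only [show k+4-1 = k+3 from by omega] using this
    · rw [if_neg hk4]
      exact sum_mul_e _ _ _ _ (by omega) hb2
        (fun r hr => by have := Finset.mem_Icc.mp hr; omega)
  have F12 : e n (n-1) 0 * e n (k+1) n = 0 := e_mul_e_of_ne _ _ (by omega) (by omega) (by omega)
  have F13 : e n (n-1) 0 * (∑ m ∈ Finset.Icc (k+4) n, dc k m • e n (m-1) (m-k-2)) = 0 :=
    e_mul_sum _ _ _ _ (by omega) hg1 (fun m hm => by have := Finset.mem_Icc.mp hm; omega)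
  have F14 : e n (n-1) 0 * e n (k+2) 1 = 0 := e_mul_e_of_ne _ _ (by omega) (by omega) (by omega)
  have F15 : e n (n-1) 0 * e n (k+2) 0 = 0 := e_mul_e_of_ne _ _ (by omega) (by omega) (by omega)
  have F16 : e n (n-1) 1 * e n (k+1) n = 0 := e_mul_e_of_ne _ _ (by omega) (by omega) (by omega)
  have F17 : e n (n-1) 1 * (∑ m ∈ Finset.Icc (k+4) n, dc k m • e n (m-1) (m-k-2)) = 0 :=
    e_mul_sum _ _ _ _ (by omega) hg1 (fun m hm => by have := Finset.mem_Icc.mp hm; omega)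
  have F18 : e n (n-1) 1 * e n (k+2) 1 = 0 := e_mul_e_of_ne _ _ (by omega) (by omega) (by omega)
  have F19 : e n (n-1) 1 * e n (k+2) 0 = 0 := e_mul_e_of_ne _ _ (by omega) (by omega) (by omega)
  -- backward
  have G1 : e n (k+1) n * Pm n = 0 := e_mul_Pm hn _ (by omega) (by omega)
  have G2 : e n (k+1) n * e n 1 n = 0 := e_mul_e_of_ne _ _ (by omega) (by omega) (by omega)
  have G2' : e n (k+1) n * e n 2 0 = 0 := e_mul_e_of_ne _ _ (by omega) (by omega) (by omega)
  have G2'' : e n (k+1) n * e n 2 1 = 0 := e_mul_e_of_ne _ _ (by omega) (by omega) (by omega)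
  have G3 : e n (k+1) n * (∑ r ∈ Finset.Icc 4 n, tc r • e n (r-1) (r-2)) = 0 :=
    e_mul_sum _ _ _ _ (by omega) hb1 (fun r hr => by have := Finset.mem_Icc.mp hr; omega)
  have G4 : e n (k+1) n * e n (n-1) 0 = 0 := e_mul_e_of_ne _ _ (by omega) (by omega) (by omega)
  have G5 : e n (k+1) n * e n (n-1) 1 = 0 := e_mul_e_of_ne _ _ (by omega) (by omega) (by omega)
  have G6 : (∑ m ∈ Finset.Icc (k+4) n, dc k m • e n (m-1) (m-k-2)) * Pm n = 0 :=
    sum_mul_Pm hn _ _ _ _ (fun m hm => by have := Finset.mem_Icc.mp hm; omega)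
  have G7 : (∑ m ∈ Finset.Icc (k+4) n, dc k m • e n (m-1) (m-k-2)) * e n 1 n = 0 :=
    sum_mul_e _ _ _ _ (by omega) hg2 (fun m hm => by have := Finset.mem_Icc.mp hm; omega)
  have G7a : (∑ m ∈ Finset.Icc (k+4) n, dc k m • e n (m-1) (m-k-2)) * e n 2 0
      = if k+4 ≤ n then dc k (k+4) • e n (k+3) 0 else 0 := by
    by_cases hk4 : k+4 ≤ n
    · have := sum_mul_e_single (x := 2) (y := 0) (r₀ := k+4) (Finset.Icc (k+4) n) (dc k) (·-1)
        (fun m => m-k-2) (by omega) hg2 (Finset.mem_Icc.mpr ⟨by omega, by omega⟩)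
        (fun m hm => by have := Finset.mem_Icc.mp hm; show m - k - 2 = 2 ↔ m = k+4; omega)
      rw [if_pos hk4]
      simpa only [show k+4-1 = k+3 from by omega] using this
    · rw [if_neg hk4]
      exact sum_mul_e _ _ _ _ (by omega) hg2
        (fun m hm => by have := Finset.mem_Icc.mp hm; omega)
  have G7b : (∑ m ∈ Finset.Icc (k+4) n, dc k m • e n (m-1) (m-k-2)) * e n 2 1
      = if k+4 ≤ n then dc k (k+4) • e n (k+3) 1 else 0 := by
    by_cases hk4 : k+4 ≤ n
    · have := sum_mul_e_single (x := 2) (y := 1) (r₀ := k+4) (Finset.Icc (k+4) n) (dc k) (·-1)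
        (fun m => m-k-2) (by omega) hg2 (Finset.mem_Icc.mpr ⟨by omega, by omega⟩)
        (fun m hm => by have := Finset.mem_Icc.mp hm; show m - k - 2 = 2 ↔ m = k+4; omega)
      rw [if_pos hk4]
      simpa only [show k+4-1 = k+3 from by omega] using this
    · rw [if_neg hk4]
      exact sum_mul_e _ _ _ _ (by omega) hg2
        (fun m hm => by have := Finset.mem_Icc.mp hm; omega)
  have G8 : (∑ m ∈ Finset.Icc (k+4) n, dc k m • e n (m-1) (m-k-2))
      * (∑ r ∈ Finset.Icc 4 n, tc r • e n (r-1) (r-2))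
      = ∑ m ∈ Finset.Icc (k+5) n, (dc k m * tc (m-k-1)) • e n (m-1) (m-k-1-2) := by
    rw [sum_mul_sum (Finset.Icc (k+4) n) (Finset.Icc 4 n) (dc k) tc (·-1)
      (fun m => m-k-2) (·-1) (·-2) (fun m => m-k-1) hg2 hb1 (fun m hm r hr => by
        have := Finset.mem_Icc.mp hr; have := Finset.mem_Icc.mp hm
        show m - k - 2 = r - 1 ↔ r = m - k - 1; omega)]
    show (∑ m ∈ Finset.Icc (k+4) n, if m-k-1 ∈ Finset.Icc 4 n
        then (dc k m * tc (m-k-1)) • e n (m-1) (m-k-1-2) else 0) = _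
    rw [← Finset.sum_filter]
    congr 1
    ext x
    simp only [Finset.mem_filter, Finset.mem_Icc]
    omega
  have G9 : (∑ m ∈ Finset.Icc (k+4) n, dc k m • e n (m-1) (m-k-2)) * e n (n-1) 0 = 0 :=
    sum_mul_e _ _ _ _ (by omega) hg2 (fun m hm => by have := Finset.mem_Icc.mp hm; omega)
  have G10 : (∑ m ∈ Finset.Icc (k+4) n, dc k m • e n (m-1) (m-k-2)) * e n (n-1) 1 = 0 :=
    sum_mul_e _ _ _ _ (by omega) hg2 (fun m hm => by have := Finset.mem_Icc.mp hm; omega)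
  have G11 : e n (k+2) 1 * Pm n = e n (k+2) 0 + e n (k+2) 1 := e1_mul_Pm hn _
  have G12 : e n (k+2) 0 * Pm n = e n (k+2) 0 + e n (k+2) 1 := e0_mul_Pm hn _
  have G13 : e n (k+2) 1 * e n 1 n = e n (k+2) n := e_mul_e_of_eq _ _ rfl
  have G14 : e n (k+2) 0 * e n 1 n = 0 := e_mul_e_of_ne _ _ (by omega) (by omega) (by omega)
  have G13' : e n (k+2) 1 * e n 2 0 = 0 := e_mul_e_of_ne _ _ (by omega) (by omega) (by omega)
  have G14' : e n (k+2) 0 * e n 2 0 = 0 := e_mul_e_of_ne _ _ (by omega) (by omega) (by omega)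
  have G13'' : e n (k+2) 1 * e n 2 1 = 0 := e_mul_e_of_ne _ _ (by omega) (by omega) (by omega)
  have G14'' : e n (k+2) 0 * e n 2 1 = 0 := e_mul_e_of_ne _ _ (by omega) (by omega) (by omega)
  have G15 : e n (k+2) 1 * (∑ r ∈ Finset.Icc 4 n, tc r • e n (r-1) (r-2)) = 0 :=
    e_mul_sum _ _ _ _ (by omega) hb1 (fun r hr => by have := Finset.mem_Icc.mp hr; omega)
  have G16 : e n (k+2) 0 * (∑ r ∈ Finset.Icc 4 n, tc r • e n (r-1) (r-2)) = 0 :=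
    e_mul_sum _ _ _ _ (by omega) hb1 (fun r hr => by have := Finset.mem_Icc.mp hr; omega)
  have G17 : e n (k+2) 1 * e n (n-1) 0 = 0 := e_mul_e_of_ne _ _ (by omega) (by omega) (by omega)
  have G18 : e n (k+2) 0 * e n (n-1) 0 = 0 := e_mul_e_of_ne _ _ (by omega) (by omega) (by omega)
  have G19 : e n (k+2) 1 * e n (n-1) 1 = 0 := e_mul_e_of_ne _ _ (by omega) (by omega) (by omega)
  have G20 : e n (k+2) 0 * e n (n-1) 1 = 0 := e_mul_e_of_ne _ _ (by omega) (by omega) (by omega)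
  -- coefficient conversions
  have hI4 : tc (k+3) = dc k (k+3) := I4 k
  have hsum : (∑ r ∈ Finset.Icc (k+5) n, (tc r * dc k (r-1)) • e n (r-1) (r-1-k-2))
      = ∑ m ∈ Finset.Icc (k+5) n, (dc k m * tc (m-k-1)) • e n (m-1) (m-k-1-2) := by
    refine Finset.sum_congr rfl fun m hm => ?_
    have hm' := Finset.mem_Icc.mp hm
    obtain ⟨j, rfl⟩ : ∃ j, m = k+5+j := ⟨m-(k+5), by omega⟩
    rw [show k+5+j-1-k-2 = k+5+j-k-1-2 by omega,
      show k+5+j-1 = k+4+j by omega, show k+5+j-k-1 = j+4 by omega, I6 k j]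
  -- expand
  rw [Ring.lie_def]
  conv_lhs => rw [Y2_eq, Bm, if_pos hk3]
  simp only [add_mul, sub_mul, mul_add, mul_sub, smul_mul_assoc, mul_smul_comm]
  rw [F1, F2, F3, F4, F5, F6, F7, F8, F5', F6', F7', F8', F5'', F6'', F7'', F8'',
    F9, F10, F11a, F11b, F12, F13, F14, F15, F16, F17, F18, F19,
    G1, G2, G2', G2'', G3, G4, G5, G6, G7, G7a, G7b, G8, G9, G10, G11, G12, G13, G14,
    G13', G14', G13'', G14'', G15, G16, G17, G18, G19, G20]
  have ca : (if k+4 ≤ n then tc (k+4) • e n (k+3) 1 else 0)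
      = tc (k+4) • (if k+4 ≤ n then e n (k+3) 1 else 0) := by split <;> simp
  have cb : (if k+4 ≤ n then tc (k+4) • e n (k+3) 0 else 0)
      = tc (k+4) • (if k+4 ≤ n then e n (k+3) 0 else 0) := by split <;> simp
  have cc : (if k+4 ≤ n then dc k (k+4) • e n (k+3) 1 else 0)
      = dc k (k+4) • (if k+4 ≤ n then e n (k+3) 1 else 0) := by split <;> simp
  have cd : (if k+4 ≤ n then dc k (k+4) • e n (k+3) 0 else 0)
      = dc k (k+4) • (if k+4 ≤ n then e n (k+3) 0 else 0) := by split <;> simp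
  rw [hI4, hsum, ca, cb, cc, cd]
  have I5' : dc k (3+k) * tc (4+k) - dc k (4+k) = 0 := by
    rw [show 3+k = k+3 by omega, show 4+k = k+4 by omega]
    linear_combination I5 k
  match_scalars
  all_goals (try ring)
  all_goals (try linear_combination I5')
  all_goals linear_combination -I5'


lemma BmLast : Bm n (n-2) = e n (n-1) n := by
  unfold Bm
  rw [show n-2+1 = n-1 by omega,
    Finset.Icc_eq_empty (by omega : ¬ (n-2+4 ≤ n)),
    Finset.sum_empty, if_neg (by omega), add_zero, add_zero]

lemma braY1Last (a α β : ℂ) : ⁅Y1 n a α β, e n (n-1) n⁆ = 0 := by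
  have hb1 : ∀ r ∈ Finset.Icc 4 n, r-1 < n+1 := fun r hr => by
    have := Finset.mem_Icc.mp hr; omega
  have hb2 : ∀ r ∈ Finset.Icc 4 n, r-2 < n+1 := fun r hr => by
    have := Finset.mem_Icc.mp hr; omega
  have F1 : Pm n * e n (n-1) n = 0 := Pm_mul_e hn n (by omega) (by omega)
  have F2 : e n 0 n * e n (n-1) n = 0 := e_mul_e_of_ne _ _ (by omega) (by omega) (by omega)
  have F3 : (∑ r ∈ Finset.Icc 4 n, sc r • e n (r-1) (r-2)) * e n (n-1) n = 0 :=
    sum_mul_e _ _ _ _ (by omega) hb2 (fun r hr => by have := Finset.mem_Icc.mp hr; omega)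
  have F4 : e n (n-1) 0 * e n (n-1) n = 0 := e_mul_e_of_ne _ _ (by omega) (by omega) (by omega)
  have F5 : e n (n-1) 1 * e n (n-1) n = 0 := e_mul_e_of_ne _ _ (by omega) (by omega) (by omega)
  have G1 : e n (n-1) n * Pm n = 0 := e_mul_Pm hn _ (by omega) (by omega)
  have G2 : e n (n-1) n * e n 0 n = 0 := e_mul_e_of_ne _ _ (by omega) (by omega) (by omega)
  have G3 : e n (n-1) n * (∑ r ∈ Finset.Icc 4 n, sc r • e n (r-1) (r-2)) = 0 :=
    e_mul_sum _ _ _ _ (by omega) hb1 (fun r hr => by have := Finset.mem_Icc.mp hr; omega)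
  have G4 : e n (n-1) n * e n (n-1) 0 = 0 := e_mul_e_of_ne _ _ (by omega) (by omega) (by omega)
  have G5 : e n (n-1) n * e n (n-1) 1 = 0 := e_mul_e_of_ne _ _ (by omega) (by omega) (by omega)
  rw [Ring.lie_def, Y1_eq]
  simp only [add_mul, sub_mul, mul_add, mul_sub, smul_mul_assoc, mul_smul_comm]
  rw [F1, F2, F3, F4, F5, G1, G2, G3, G4, G5]
  simp

lemma braY2Last (a α β : ℂ) : ⁅Y2 n a α β, e n (n-1) n⁆ = 0 := by
  have hb1 : ∀ r ∈ Finset.Icc 4 n, r-1 < n+1 := fun r hr => by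
    have := Finset.mem_Icc.mp hr; omega
  have hb2 : ∀ r ∈ Finset.Icc 4 n, r-2 < n+1 := fun r hr => by
    have := Finset.mem_Icc.mp hr; omega
  have F1 : Pm n * e n (n-1) n = 0 := Pm_mul_e hn n (by omega) (by omega)
  have F2 : e n 1 n * e n (n-1) n = 0 := e_mul_e_of_ne _ _ (by omega) (by omega) (by omega)
  have F2' : e n 2 0 * e n (n-1) n = 0 := e_mul_e_of_ne _ _ (by omega) (by omega) (by omega)
  have F2'' : e n 2 1 * e n (n-1) n = 0 := e_mul_e_of_ne _ _ (by omega) (by omega) (by omega)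
  have F3 : (∑ r ∈ Finset.Icc 4 n, tc r • e n (r-1) (r-2)) * e n (n-1) n = 0 :=
    sum_mul_e _ _ _ _ (by omega) hb2 (fun r hr => by have := Finset.mem_Icc.mp hr; omega)
  have F4 : e n (n-1) 0 * e n (n-1) n = 0 := e_mul_e_of_ne _ _ (by omega) (by omega) (by omega)
  have F5 : e n (n-1) 1 * e n (n-1) n = 0 := e_mul_e_of_ne _ _ (by omega) (by omega) (by omega)
  have G1 : e n (n-1) n * Pm n = 0 := e_mul_Pm hn _ (by omega) (by omega)
  have G2 : e n (n-1) n * e n 1 n = 0 := e_mul_e_of_ne _ _ (by omega) (by omega) (by omega)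
  have G2' : e n (n-1) n * e n 2 0 = 0 := e_mul_e_of_ne _ _ (by omega) (by omega) (by omega)
  have G2'' : e n (n-1) n * e n 2 1 = 0 := e_mul_e_of_ne _ _ (by omega) (by omega) (by omega)
  have G3 : e n (n-1) n * (∑ r ∈ Finset.Icc 4 n, tc r • e n (r-1) (r-2)) = 0 :=
    e_mul_sum _ _ _ _ (by omega) hb1 (fun r hr => by have := Finset.mem_Icc.mp hr; omega)
  have G4 : e n (n-1) n * e n (n-1) 0 = 0 := e_mul_e_of_ne _ _ (by omega) (by omega) (by omega)
  have G5 : e n (n-1) n * e n (n-1) 1 = 0 := e_mul_e_of_ne _ _ (by omega) (by omega) (by omega)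
  rw [Ring.lie_def, Y2_eq]
  simp only [add_mul, sub_mul, mul_add, mul_sub, smul_mul_assoc, mul_smul_comm]
  rw [F1, F2, F2', F2'', F3, F4, F5, G1, G2, G2', G2'', G3, G4, G5]
  simp

lemma Yad_form (a α β : ℂ) :
    ∀ k, Yad n a α β (k+1) = if k+1 ≤ n-2 then Bm n (k+1) else 0 := by
  intro k
  induction k with
  | zero =>
    show ⁅Y1 n a α β, Y2 n a α β⁆ = _
    rw [bra12 hn, if_pos (by omega : 0+1 ≤ n-2)]
  | succ k ih =>
    show ⁅Y1 n a α β, Yad n a α β (k+1)⁆ = _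
    rw [ih]
    rcases Nat.lt_or_ge (k+1) (n-2) with h | h
    · rw [if_pos (by omega)]
      rcases Nat.lt_or_ge (k+2) (n-2) with h2 | h2
      · rw [braStep hn a α β (k+1) (by omega) (by omega), if_pos (by omega)]
      · have hk : k+1 = n-2 - 1 := by omega
        have hkk : k + 1 + 1 = n - 2 := by omega
        rcases Nat.lt_or_ge (k+1) (n-3) with h3 | h3
        · rw [braStep hn a α β (k+1) (by omega) (by omega), if_pos (by omega)]
        · -- k+1 = n-3, so k+2 = n-2 : still step case
          rw [braStep hn a α β (k+1) (by omega) (by omega), if_pos (by omega)]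
    · -- k+1 ≥ n-2, i.e. k+1 = n-2 or beyond
      rcases Nat.lt_or_ge (n-2) (k+1) with h2 | h2
      · rw [if_neg (by omega), lie_zero, if_neg (by omega)]
      · have hk : k+1 = n-2 := by omega
        rw [if_pos (by omega), hk, BmLast hn, braY1Last hn, if_neg (by omega)]

lemma Y2_bra_all (a α β : ℂ) :
    ∀ m, ⁅Yad n a α β 0, Yad n a α β m⁆ = 0 := by
  intro m
  match m with
  | 0 => exact lie_self _
  | k+1 =>
    rw [Yad_form hn a α β k]
    rcases Nat.lt_or_ge (k+1) (n-2) with h | h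
    · rw [if_pos (by omega)]
      show ⁅Y2 n a α β, Bm n (k+1)⁆ = 0
      exact braY2 hn a α β (k+1) (by omega) (by omega)
    · rcases Nat.lt_or_ge (n-2) (k+1) with h2 | h2
      · rw [if_neg (by omega), lie_zero]
      · have hk : k+1 = n-2 := by omega
        rw [if_pos (by omega), hk, BmLast hn]
        exact braY2Last hn a α β

end withHn
end IBC
end

/-- All the iterated brackets ad(Y1)^k(Y2), k ≥ 0, commute pairwise. -/
theorem iterated_brackets_commute (n : ℕ) (hn : 4 ≤ n) (a α β : ℂ) (ha : a ≠ 0) :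
    ∀ i j : ℕ, ⁅Yad n a α β i, Yad n a α β j⁆ = 0 := by
  letI := LieRing.ofAssociativeRing (A := Matrix (Fin (n+1)) (Fin (n+1)) ℂ)
  intro i
  induction i with
  | zero => exact fun j => IBC.Y2_bra_all hn a α β j
  | succ i ih =>
    intro j
    show ⁅⁅Y1 n a α β, Yad n a α β i⁆, Yad n a α β j⁆ = 0
    rw [lie_lie, ih j, lie_zero]
    have h2 : ⁅Y1 n a α β, Yad n a α β j⁆ = Yad n a α β (j+1) := rfl
    rw [h2, ih (j+1)]
    simp
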